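/- Let A be the free graded-commutative ℝ-DGA on generators a₁, a₂ of degree 3, b of degree 5, and c₂ of degree 7, with da₁ = da₂ = 0, db = a₁a₂, dc₂ = b·a₂. Let H = Λ(x,y)/(x³) with deg x = 2, deg y = 3, d = 0, and let Ω*[0,1] act as forms on the interval. Then the map η_L : A → H ⊗ Ω*[0,1] given by η_L(a₁) = y, η_L(a₂) = -2L⁶ x dt, η_L(b) = L⁶ y x (2t - 1), η_L(c₂) = 2L¹² y x² t(1-t) is a DGA homomorphism, and restricts at t = 0 to φ_L and at t = 1 to ψ_L (where φ_L(b) = -L⁶yx, ψ_L(b) = L⁶yx, both vanishing on a₂, c₂ and sending a₁ to y). -/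

import Mathlib

open Set

/-- A DGA homomorphism `η : A → H ⊗ Ω*[0,1]`, where
`A = Λ(a₁,a₂,b,c₂)` with `deg a₁ = deg a₂ = 3`, `deg b = 5`, `deg c₂ = 7`,
`d a₁ = d a₂ = 0`, `d b = a₁a₂`, `d c₂ = b a₂`, and
`H = Λ(x,y)/(x³)` (`deg x = 2`, `deg y = 3`, zero differential),
written out in coordinates.  Degree bookkeeping in `H ⊗ Ω*[0,1]`
(`H` has basis `1, x, x², y, yx, yx²` in degrees `0,2,4,3,5,7`, and a form is
`f(t) + g(t) dt`) forces
  `η(a₁) = A₁(t)·y + F₁(t)·x dt`,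
  `η(a₂) = A₂(t)·y + F₂(t)·x dt`,
  `η(b)  = B(t)·yx + G(t)·x² dt`,
  `η(c₂) = C(t)·yx²` (the degree-6 part of `H` is zero),
and the compatibility `d ∘ η = η ∘ d` with the differentials is exactly the system of
ODEs recorded in the fields `d_a₁, d_a₂, d_b, d_c₂` below (Koszul signs as in the
paper's conventions). -/
structure CoeffDGAHom where
  A₁ : ℝ → ℝ
  A₂ : ℝ → ℝ
  B : ℝ → ℝ
  C : ℝ → ℝ
  F₁ : ℝ → ℝ
  F₂ : ℝ → ℝ
  G : ℝ → ℝ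
  hA₁ : Differentiable ℝ A₁
  hA₂ : Differentiable ℝ A₂
  hB : Differentiable ℝ B
  hC : Differentiable ℝ C
  hF₁ : Continuous F₁
  hF₂ : Continuous F₂
  hG : Continuous G
  /-- `η(d a₁) = 0 = d(η a₁)` -/
  d_a₁ : ∀ t ∈ Icc (0 : ℝ) 1, deriv A₁ t = 0
  /-- `η(d a₂) = 0 = d(η a₂)` -/
  d_a₂ : ∀ t ∈ Icc (0 : ℝ) 1, deriv A₂ t = 0
  /-- `d(η b) = η(a₁) · η(a₂)` -/
  d_b : ∀ t ∈ Icc (0 : ℝ) 1, deriv B t = -(A₁ t * F₂ t - A₂ t * F₁ t)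
  /-- `d(η c₂) = η(b) · η(a₂)` -/
  d_c₂ : ∀ t ∈ Icc (0 : ℝ) 1, deriv C t = B t * F₂ t - G t * A₂ t

/-- the explicit map `η_L` with
`η_L(a₁) = y`, `η_L(a₂) = -2L⁶ x dt`, `η_L(b) = L⁶ yx (2t-1)`,
`η_L(c₂) = 2L¹² yx² t(1-t)` is a DGA homomorphism `A → H ⊗ Ω*[0,1]`, and it restricts
at `t = 0` to `φ_L` and at `t = 1` to `ψ_L` (where `φ_L(b) = -L⁶ yx`,
`ψ_L(b) = L⁶ yx`, both send `a₁ ↦ y` and vanish on `a₂` and `c₂`). -/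
theorem stmt_14 (L : ℝ) :
    ∃ η : CoeffDGAHom,
      η.A₁ = (fun _ => (1 : ℝ)) ∧ η.F₁ = (fun _ => (0 : ℝ)) ∧
      η.A₂ = (fun _ => (0 : ℝ)) ∧ η.F₂ = (fun _ => -2 * L ^ 6) ∧
      η.B = (fun t => L ^ 6 * (2 * t - 1)) ∧ η.G = (fun _ => (0 : ℝ)) ∧
      η.C = (fun t => 2 * L ^ 12 * t * (1 - t)) ∧
      -- restriction at `t = 0` is `φ_L` (the `dt`-parts die under restriction):
      η.A₁ 0 = 1 ∧ η.A₂ 0 = 0 ∧ η.B 0 = -L ^ 6 ∧ η.C 0 = 0 ∧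
      -- restriction at `t = 1` is `ψ_L`:
      η.A₁ 1 = 1 ∧ η.A₂ 1 = 0 ∧ η.B 1 = L ^ 6 ∧ η.C 1 = 0 := by
  refine ⟨⟨fun _ => 1, fun _ => 0, fun t => L ^ 6 * (2 * t - 1),
      fun t => 2 * L ^ 12 * t * (1 - t), fun _ => 0, fun _ => -2 * L ^ 6, fun _ => 0,
      differentiable_const _, differentiable_const _, by fun_prop, by fun_prop,
      continuous_const, continuous_const, continuous_const,
      ?_, ?_, ?_, ?_⟩, rfl, rfl, rfl, rfl, rfl, rfl, rfl, ?_, rfl, ?_, ?_, rfl, rfl, ?_, ?_⟩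
  · intro t _; simp
  · intro t _; simp
  · intro t _
    have : deriv (fun t : ℝ => L ^ 6 * (2 * t - 1)) t = 2 * L ^ 6 := by
      rw [deriv_const_mul _ (by fun_prop)]
      have : deriv (fun t : ℝ => 2 * t - 1) t = 2 := by
        rw [deriv_fun_sub (by fun_prop) (by fun_prop), deriv_const_mul _ (by fun_prop)]
        simp
      rw [this]; ring
    rw [this]; ring
  · intro t _
    have : deriv (fun t : ℝ => 2 * L ^ 12 * t * (1 - t)) t
        = 2 * L ^ 12 * (1 - t) + 2 * L ^ 12 * t * (-1) := by
      have h1 : (fun t : ℝ => 2 * L ^ 12 * t * (1 - t))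
          = fun t : ℝ => (2 * L ^ 12 * t) * (1 - t) := rfl
      rw [h1, deriv_fun_mul (by fun_prop) (by fun_prop)]
      have h2 : deriv (fun t : ℝ => 2 * L ^ 12 * t) t = 2 * L ^ 12 := by
        rw [deriv_const_mul _ (by fun_prop)]; simp
      have h3 : deriv (fun t : ℝ => 1 - t) t = -1 := by
        rw [deriv_fun_sub (by fun_prop) (by fun_prop)]; simp
      rw [h2, h3]
    rw [this]; ring
  · rfl
  · show L ^ 6 * (2 * 0 - 1) = -L ^ 6; ring
  · show 2 * L ^ 12 * 0 * (1 - 0) = 0; ring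
  · show L ^ 6 * (2 * 1 - 1) = L ^ 6; ring
  · show 2 * L ^ 12 * 1 * (1 - 1) = 0; ring
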